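/- Let a ∈ (0,∞) and let φ : [0,a] → [0,∞) be a nondecreasing, concave function vanishing only at the origin, with lim_{t→0+} t/φ(t) = 0 and lim_{t→0+} φ(t) = 0. Then there exist sequences (t_k)_{k≥1} and (τ_k)_{k≥1} of positive real numbers, both converging to 0, such that t_1 = a and, for every k ∈ ℕ: t_{k+1} < τ_k < t_k/2 < t_k, (φ(τ_k) − φ(t_{k+1}))/(τ_k − t_{k+1}) > 2^{k+1} · (φ(t_k) − φ(t_{k+1}))/(t_k − t_{k+1}), and φ(t_{k+1}) ≤ 2^{−k−1} φ(τ_k). -/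

import Mathlib

open Filter Set

/-- Under the same assumptions on `φ`, there exist positive sequences
`(t_k)_{k≥1}`, `(τ_k)_{k≥1}` converging to `0`, with `t_1 = a`, such that for every `k ≥ 1`:
`t_{k+1} < τ_k < t_k/2 < t_k`, the slope condition
`(φ(τ_k) − φ(t_{k+1}))/(τ_k − t_{k+1}) > 2^{k+1} (φ(t_k) − φ(t_{k+1}))/(t_k − t_{k+1})`,
and `φ(t_{k+1}) ≤ 2^{−k−1} φ(τ_k)`. -/
theorem stmt_1 (a : ℝ) (ha : 0 < a) (φ : ℝ → ℝ)
    (hmono : MonotoneOn φ (Icc 0 a))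
    (hconc : ConcaveOn ℝ (Icc 0 a) φ)
    (hnonneg : ∀ t ∈ Icc 0 a, 0 ≤ φ t)
    (hvanish : ∀ t ∈ Icc 0 a, φ t = 0 ↔ t = 0)
    (hlim1 : Tendsto (fun t => t / φ t) (nhdsWithin 0 (Ioc 0 a)) (nhds 0))
    (hlim2 : Tendsto φ (nhdsWithin 0 (Ioc 0 a)) (nhds 0)) :
    ∃ t τ : ℕ → ℝ,
      (∀ k, 1 ≤ k → 0 < t k) ∧
      (∀ k, 1 ≤ k → 0 < τ k) ∧
      Tendsto t atTop (nhds 0) ∧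
      Tendsto τ atTop (nhds 0) ∧
      t 1 = a ∧
      (∀ k, 1 ≤ k →
        t (k + 1) < τ k ∧ τ k < t k / 2 ∧ t k / 2 < t k ∧
        (φ (τ k) - φ (t (k + 1))) / (τ k - t (k + 1)) >
          2 ^ (k + 1) * ((φ (t k) - φ (t (k + 1))) / (t k - t (k + 1))) ∧
        φ (t (k + 1)) ≤ φ (τ k) / 2 ^ (k + 1)) := by
  have hφpos : ∀ s ∈ Ioc (0:ℝ) a, 0 < φ s := by
    intro s hs
    rcases (hnonneg s (Ioc_subset_Icc_self hs)).lt_or_eq with h | h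
    · exact h
    · exact absurd ((hvanish s (Ioc_subset_Icc_self hs)).mp h.symm) hs.1.ne'
  haveI hNB : (nhdsWithin (0:ℝ) (Ioc 0 a)).NeBot := by
    refine mem_closure_iff_nhdsWithin_neBot.mp ?_
    rw [closure_Ioc ha.ne]
    exact ⟨le_refl 0, ha.le⟩
  have hid : Tendsto (fun s : ℝ => s) (nhdsWithin 0 (Ioc 0 a)) (nhds 0) :=
    tendsto_id.mono_right nhdsWithin_le_nhds
  -- key recursive step
  have key : ∀ k : ℕ, ∀ u ∈ Ioc (0:ℝ) a, ∃ τ, τ ∈ Ioc (0:ℝ) a ∧ ∃ u', u' ∈ Ioc (0:ℝ) a ∧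
      u' < τ ∧ τ < u / 2 ∧
      (φ τ - φ u') / (τ - u') > 2 ^ (k + 1) * ((φ u - φ u') / (u - u')) ∧
      φ u' ≤ φ τ / 2 ^ (k + 1) := by
    intro k u hu
    have hu0 : (0:ℝ) < u := hu.1
    have hφu : 0 < φ u := hφpos u hu
    -- pick τ
    have hδ : (0:ℝ) < u / (2 ^ (k + 2) * φ u) := by positivity
    have h1 : ∀ᶠ s in nhdsWithin (0:ℝ) (Ioc 0 a),
        s / φ s < u / (2 ^ (k + 2) * φ u) := hlim1.eventually_lt_const hδ
    have h2 : ∀ᶠ s in nhdsWithin (0:ℝ) (Ioc 0 a), s < u / 2 :=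
      hid.eventually_lt_const (by positivity)
    have h3 : ∀ᶠ s in nhdsWithin (0:ℝ) (Ioc 0 a), s ∈ Ioc (0:ℝ) a :=
      eventually_mem_nhdsWithin
    obtain ⟨τ, hτ1, hτ2, hτ3⟩ := (h1.and (h2.and h3)).exists
    have hτ0 : (0:ℝ) < τ := hτ3.1
    have hφτ : 0 < φ τ := hφpos τ hτ3
    have hq : 2 ^ (k + 2) * (φ u / u) < φ τ / τ := by
      have h1' : τ * (2 ^ (k + 2) * φ u) < u * φ τ :=
        (div_lt_div_iff₀ hφτ (by positivity)).mp hτ1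
      have h2' : 2 ^ (k + 2) * (φ u / u) = 2 ^ (k + 2) * φ u / u :=
        (mul_div_assoc _ _ _).symm
      rw [h2', div_lt_div_iff₀ hu0 hτ0]
      nlinarith
    -- pick u'
    have Anum : Tendsto (fun s : ℝ => φ τ - φ s) (nhdsWithin (0:ℝ) (Ioc 0 a))
        (nhds (φ τ - 0)) := tendsto_const_nhds.sub hlim2
    have Aden : Tendsto (fun s : ℝ => τ - s) (nhdsWithin (0:ℝ) (Ioc 0 a))
        (nhds (τ - 0)) := tendsto_const_nhds.sub hid
    have L1 : Tendsto (fun s => (φ τ - φ s) / (τ - s)) (nhdsWithin (0:ℝ) (Ioc 0 a))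
        (nhds (φ τ / τ)) := by
      have := Anum.div Aden (by simpa using hτ0.ne')
      simp only [sub_zero] at this; exact this
    have Bnum : Tendsto (fun s : ℝ => φ u - φ s) (nhdsWithin (0:ℝ) (Ioc 0 a))
        (nhds (φ u - 0)) := tendsto_const_nhds.sub hlim2
    have Bden : Tendsto (fun s : ℝ => u - s) (nhdsWithin (0:ℝ) (Ioc 0 a))
        (nhds (u - 0)) := tendsto_const_nhds.sub hid
    have L2 : Tendsto (fun s => 2 ^ (k + 1) * ((φ u - φ s) / (u - s)))
        (nhdsWithin (0:ℝ) (Ioc 0 a)) (nhds (2 ^ (k + 1) * (φ u / u))) := by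
      have h0 := Bnum.div Bden (by simpa using hu0.ne')
      have := (tendsto_const_nhds (x := (2:ℝ) ^ (k + 1))).mul h0
      simpa using this
    have hlow : 2 ^ (k + 1) * (φ u / u) < φ τ / τ := by
      have hpp : (0:ℝ) < φ u / u := by positivity
      have : (2:ℝ) ^ (k + 1) < 2 ^ (k + 2) := by
        have := pow_lt_pow_right₀ (one_lt_two (α := ℝ)) (Nat.lt_succ_self (k + 1))
        simpa using this
      nlinarith
    have e1 : ∀ᶠ s in nhdsWithin (0:ℝ) (Ioc 0 a),
        2 ^ (k + 1) * ((φ u - φ s) / (u - s)) < (φ τ - φ s) / (τ - s) :=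
      L2.eventually_lt L1 hlow
    have e2 : ∀ᶠ s in nhdsWithin (0:ℝ) (Ioc 0 a), φ s < φ τ / 2 ^ (k + 1) :=
      hlim2.eventually_lt_const (by positivity)
    have e3 : ∀ᶠ s in nhdsWithin (0:ℝ) (Ioc 0 a), s < τ := hid.eventually_lt_const hτ0
    obtain ⟨u', h1', h2', h3', h4'⟩ := (e1.and (e2.and (e3.and h3))).exists
    exact ⟨τ, hτ3, u', h4', h3', hτ2, h1', h2'.le⟩
  choose! τf hτmem uf humem hlt hhalf hslope hsmall using key
  -- build the sequence
  let f : ℕ → ℝ := fun n => Nat.rec a (fun n fn => uf (n + 1) fn) n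
  have hf0 : f 0 = a := rfl
  have hfs : ∀ n, f (n + 1) = uf (n + 1) (f n) := fun n => rfl
  have hfmem : ∀ n, f n ∈ Ioc (0:ℝ) a := by
    intro n
    induction n with
    | zero => exact ⟨ha, le_refl a⟩
    | succ n ih => rw [hfs]; exact humem (n + 1) (f n) ih
  have hfhalf : ∀ n, f (n + 1) < f n / 2 := by
    intro n
    rw [hfs]
    exact lt_trans (hlt (n + 1) (f n) (hfmem n)) (hhalf (n + 1) (f n) (hfmem n))
  have hfbound : ∀ n, f n ≤ a / 2 ^ n := by
    intro n
    induction n with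
    | zero => simp [hf0]
    | succ n ih =>
      have := hfhalf n
      have : f (n + 1) < a / 2 ^ n / 2 := by linarith
      calc f (n + 1) ≤ a / 2 ^ n / 2 := this.le
        _ = a / 2 ^ (n + 1) := by rw [div_div, pow_succ]
  have hupper : Tendsto (fun n : ℕ => a / 2 ^ n) atTop (nhds 0) := by
    have h : Tendsto (fun n : ℕ => a * (2⁻¹:ℝ) ^ n) atTop (nhds (a * 0)) :=
      tendsto_const_nhds.mul
        (tendsto_pow_atTop_nhds_zero_of_lt_one (by norm_num : (0:ℝ) ≤ 2⁻¹) (by norm_num))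
    simpa [div_eq_mul_inv, inv_pow] using h
  have hftend : Tendsto f atTop (nhds 0) :=
    tendsto_of_tendsto_of_tendsto_of_le_of_le tendsto_const_nhds hupper
      (fun n => (hfmem n).1.le) hfbound
  refine ⟨fun k => f (k - 1), fun k => τf k (f (k - 1)), ?_, ?_, ?_, ?_, rfl, ?_⟩
  · intro k _
    exact (hfmem (k - 1)).1
  · intro k _
    exact (hτmem k (f (k - 1)) (hfmem (k - 1))).1
  · exact hftend.comp (tendsto_sub_atTop_nat 1)
  · refine tendsto_of_tendsto_of_tendsto_of_le_of_le tendsto_const_nhds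
      (hftend.comp (tendsto_sub_atTop_nat 1)) ?_ ?_
    · intro k
      exact (hτmem k (f (k - 1)) (hfmem (k - 1))).1.le
    · intro k
      have h1 := hhalf k (f (k - 1)) (hfmem (k - 1))
      have h2 := (hfmem (k - 1)).1
      simp only [Function.comp]
      linarith
  · rintro (_ | n) hk
    · omega
    have hmem := hfmem n
    have hpos := (hfmem n).1
    exact ⟨hlt (n + 1) (f n) hmem, hhalf (n + 1) (f n) hmem,
      by show f n / 2 < f n; linarith,
      hslope (n + 1) (f n) hmem, hsmall (n + 1) (f n) hmem⟩
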